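/- Let the activation be h-smoothly approximately ReLU (for some h > 0). Let V = (V_1,…,V_{L+1}) and W = (W_1,…,W_{L+1}) be weight tuples and ℓ ∈ {1,…,L+1} such that V_j = W_j for all j ≠ ℓ, and suppose ‖V‖, ‖W‖ > √(L + 1/2). Then for every example s (with ‖x_s‖ = 1): (1) ‖u_{j,s}^V‖ ≤ ‖V‖^{L+1} for all j ∈ {1,…,L+1}; (2) ‖x_{j,s}^V‖ ≤ ‖V‖^{L+1} for all j ∈ {0,…,L}; (3) ‖u_{j,s}^V − u_{j,s}^W‖ ≤ ‖V_ℓ − W_ℓ‖_op·‖V‖^{L+1} for all j ∈ {1,…,L+1}; and (4) ‖x_{j,s}^V − x_{j,s}^W‖ ≤ ‖V_ℓ − W_ℓ‖_op·‖V‖^{L+1} for all j ∈ {0,…,L}. -/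

import Mathlib

open scoped BigOperators
noncomputable section

abbrev Params (L p : ℕ) := EuclideanSpace ℝ ((Fin L × Fin p × Fin p) ⊕ Fin p)

def layerMat {L p : ℕ} (w : Params L p) (ℓ : Fin L) : Matrix (Fin p) (Fin p) ℝ :=
  Matrix.of fun i j => w (Sum.inl (ℓ, i, j))

def outVec {L p : ℕ} (w : Params L p) : Fin p → ℝ := fun j => w (Sum.inr j)

def SmoothApproxReLU (φ : ℝ → ℝ) (h : ℝ) : Prop :=
  Differentiable ℝ φ ∧ φ 0 = 0 ∧
    (∀ z₁ z₂ : ℝ, |deriv φ z₁ - deriv φ z₂| ≤ (1 / h) * |z₁ - z₂|) ∧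
    (∀ z : ℝ, |deriv φ z| ≤ 1) ∧ (∀ z : ℝ, |deriv φ z * z - φ z| ≤ h / 2)

def feat {L p : ℕ} (φ : ℝ → ℝ) (w : Params L p) (x : Fin p → ℝ) : ℕ → Fin p → ℝ
  | 0 => x
  | ℓ + 1 =>
    if hl : ℓ < L then fun i => φ ((layerMat w ⟨ℓ, hl⟩).mulVec (feat φ w x ℓ) i)
    else feat φ w x ℓ

def netOut {L p : ℕ} (φ : ℝ → ℝ) (w : Params L p) (x : Fin p → ℝ) : ℝ :=
  ∑ j, outVec w j * feat φ w x L j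

def lossS {L p : ℕ} (φ : ℝ → ℝ) (x : Fin p → ℝ) (y : ℝ) (w : Params L p) : ℝ :=
  Real.log (1 + Real.exp (-(y * netOut φ w x)))

def loss {L p n : ℕ} (φ : ℝ → ℝ) (x : Fin n → Fin p → ℝ) (y : Fin n → ℝ) (w : Params L p) : ℝ :=
  (1 / (n : ℝ)) * ∑ s, lossS φ (x s) (y s) w

def enorm' {p : ℕ} (v : Fin p → ℝ) : ℝ := Real.sqrt (∑ i, v i ^ 2)

def hmax (L p : ℕ) (J1 nV1 : ℝ) : ℝ :=
  min ((L : ℝ) ^ ((L : ℝ) / 2 - 3) * Real.log (1 / J1) / (24 * Real.sqrt p * nV1 ^ L)) 1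

def alphaMax (L p : ℕ) (J1 nV1 h : ℝ) : ℝ :=
  min (h / (1024 * ((L : ℝ) + 1) ^ 2 * p * J1 * nV1 ^ (3 * L + 5)))
    (((L : ℝ) + 1 / 2) * nV1 ^ 2 /
      (2 * L * ((L : ℝ) + 3 / 4) ^ 2 * J1 * Real.log (1 / J1) ^ ((2 : ℝ) / L)))

def Qtilde (L : ℕ) (J1 nV1 α : ℝ) : ℝ :=
  (L : ℝ) * ((L : ℝ) + 3 / 4) ^ 2 * α * J1 * Real.log (1 / J1) ^ ((2 : ℝ) / L) /
    (((L : ℝ) + 1 / 2) * nV1 ^ 2)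

def lipGrad {L p : ℕ} (J : Params L p → ℝ) (v : Params L p) : ℝ :=
  Filter.limsup (fun w : Params L p => ‖gradient J v - gradient J w‖ / ‖v - w‖)
    (nhdsWithin v {v}ᶜ)

/-- Operator (ℓ²→ℓ²) norm of a real matrix. -/
def opNorm {m k : ℕ} (A : Matrix (Fin m) (Fin k) ℝ) : ℝ :=
  ‖LinearMap.toContinuousLinearMap (Matrix.toEuclideanLin A)‖

/-- Outer-layer weights viewed as a `1 × p` matrix. -/
def outMat {L p : ℕ} (w : Params L p) : Matrix (Fin 1) (Fin p) ℝ :=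
  Matrix.of fun _ j => w (Sum.inr j)

/-- Pre-activation features `u_{ℓ+1,s}^V` of the hidden layer with 0-based index `ℓ`. -/
def uFeat {L p : ℕ} (φ : ℝ → ℝ) (w : Params L p) (x : Fin p → ℝ) (ℓ : Fin L) : Fin p → ℝ :=
  (layerMat w ℓ).mulVec (feat φ w x ℓ)

/-- The diagonal matrix `Σ_{ℓ+1,s}^V = diag(φ'(u_{ℓ+1,s}^V))`. -/
def sigmaMat {L p : ℕ} (φ : ℝ → ℝ) (w : Params L p) (x : Fin p → ℝ) (ℓ : Fin L) :
    Matrix (Fin p) (Fin p) ℝ :=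
  Matrix.diagonal fun i => deriv φ (uFeat φ w x ℓ i)

/-- `g_s(V) = 1 / (1 + exp(y_s f_V(x_s)))`. -/
def gS {L p : ℕ} (φ : ℝ → ℝ) (x : Fin p → ℝ) (y : ℝ) (w : Params L p) : ℝ :=
  1 / (1 + Real.exp (y * netOut φ w x))

/-- `V` and `W` agree on every layer except possibly the one with paper index `ℓ + 1`
(`ℓ : Fin (L+1)`; the value `ℓ = L` designates the outer layer `V_{L+1}`). -/
def eqExcept {L p : ℕ} (V W : Params L p) (ℓ : Fin (L + 1)) : Prop :=
  (∀ j : Fin L, (j : ℕ) ≠ (ℓ : ℕ) → layerMat V j = layerMat W j) ∧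
    ((ℓ : ℕ) < L → outMat V = outMat W)

/-- Operator norm `‖V_ℓ - W_ℓ‖_op` of the difference at the (single) layer with paper
index `ℓ + 1`. -/
def layerOpDiff {L p : ℕ} (V W : Params L p) (ℓ : Fin (L + 1)) : ℝ :=
  if h : (ℓ : ℕ) < L then opNorm (layerMat V ⟨ℓ, h⟩ - layerMat W ⟨ℓ, h⟩)
  else opNorm (outMat V - outMat W)


section Aux14

lemma enorm_nonneg' {p : ℕ} (v : Fin p → ℝ) : 0 ≤ enorm' v := Real.sqrt_nonneg _

lemma enorm_mono' {p : ℕ} {u v : Fin p → ℝ} (h : ∀ i, |u i| ≤ |v i|) : enorm' u ≤ enorm' v :=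
  Real.sqrt_le_sqrt (Finset.sum_le_sum fun i _ => by
    rw [← sq_abs (u i), ← sq_abs (v i)]
    exact pow_le_pow_left₀ (abs_nonneg _) (h i) 2)

lemma enorm_eq_norm' {p : ℕ} (v : Fin p → ℝ) :
    enorm' v = ‖(WithLp.equiv 2 (Fin p → ℝ)).symm v‖ := by
  rw [EuclideanSpace.norm_eq]; simp [enorm', sq_abs]

lemma abs_dot_le' {p : ℕ} (a b : Fin p → ℝ) : |∑ i, a i * b i| ≤ enorm' a * enorm' b := by
  rw [← Real.sqrt_sq_eq_abs, enorm', enorm', ← Real.sqrt_mul (by positivity)]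
  exact Real.sqrt_le_sqrt (Finset.sum_mul_sq_le_sq_mul_sq _ _ _)

lemma enorm_mulVec_le' {m k : ℕ} (A : Matrix (Fin m) (Fin k) ℝ) (v : Fin k → ℝ) :
    enorm' (A.mulVec v) ≤ Real.sqrt (∑ i, ∑ j, A i j ^ 2) * enorm' v := by
  rw [enorm', enorm', ← Real.sqrt_mul (by positivity), Finset.sum_mul]
  refine Real.sqrt_le_sqrt (Finset.sum_le_sum fun i _ => ?_)
  have hmv : A.mulVec v i = ∑ j, A i j * v j := by simp [Matrix.mulVec, dotProduct]
  rw [hmv]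
  exact Finset.sum_mul_sq_le_sq_mul_sq _ _ _

lemma enorm_fin1' (c : ℝ) : enorm' (fun _ : Fin 1 => c) = |c| := by
  simp [enorm', Real.sqrt_sq_eq_abs]

lemma opNorm_nonneg' {m k : ℕ} (A : Matrix (Fin m) (Fin k) ℝ) : 0 ≤ opNorm A := norm_nonneg _

lemma enorm_mulVec_le_op' {m k : ℕ} (A : Matrix (Fin m) (Fin k) ℝ) (v : Fin k → ℝ) :
    enorm' (A.mulVec v) ≤ opNorm A * enorm' v := by
  rw [enorm_eq_norm', enorm_eq_norm']
  have h := (LinearMap.toContinuousLinearMap (Matrix.toEuclideanLin A)).le_opNorm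
    ((WithLp.equiv 2 (Fin k → ℝ)).symm v)
  simpa [opNorm] using h

lemma normV_sq' {L p : ℕ} (V : Params L p) :
    ‖V‖ ^ 2 = (∑ l : Fin L, ∑ i, ∑ j, (layerMat V l i j) ^ 2) + ∑ j, (outVec V j) ^ 2 := by
  rw [EuclideanSpace.norm_eq, Real.sq_sqrt (by positivity), Fintype.sum_sum_type]
  simp [layerMat, outVec, sq_abs, Fintype.sum_prod_type]

lemma frob_layer_le' {L p : ℕ} (V : Params L p) (l : Fin L) :
    Real.sqrt (∑ i, ∑ j, (layerMat V l i j) ^ 2) ≤ ‖V‖ := by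
  rw [← Real.sqrt_sq (norm_nonneg V)]
  refine Real.sqrt_le_sqrt ?_
  rw [normV_sq']
  have h1 := Finset.single_le_sum (f := fun l' : Fin L => ∑ i, ∑ j, (layerMat V l' i j) ^ 2)
    (fun _ _ => by positivity) (Finset.mem_univ l)
  have h2 : (0:ℝ) ≤ ∑ j, (outVec V j) ^ 2 := by positivity
  linarith

lemma enorm_out_le' {L p : ℕ} (V : Params L p) : enorm' (outVec V) ≤ ‖V‖ := by
  rw [← Real.sqrt_sq (norm_nonneg V)]
  refine Real.sqrt_le_sqrt ?_
  rw [normV_sq']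
  have h1 : (0:ℝ) ≤ ∑ l : Fin L, ∑ i, ∑ j, (layerMat V l i j) ^ 2 := by positivity
  linarith

lemma phi_lip' {φ : ℝ → ℝ} (hd : Differentiable ℝ φ) (hb : ∀ z, |deriv φ z| ≤ 1) (a b : ℝ) :
    |φ a - φ b| ≤ |a - b| := by
  have hl : LipschitzWith 1 φ := lipschitzWith_of_nnnorm_deriv_le hd fun z => by
    rw [← NNReal.coe_le_coe, coe_nnnorm, Real.norm_eq_abs]; exact hb z
  simpa [Real.dist_eq] using hl.dist_le_mul a b

end Aux14

/-- Lemma `l:u.x.bounds`: bounds on pre- and post-activation features,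
and on their change when a single layer of the weights is swapped.  The paper's
pre-activation `u_{j,s}` for `j ∈ {1,…,L}` is `uFeat` at 0-based index `j - 1`; for
`j = L + 1` it is the scalar network output. -/
theorem statement14
    (L p : ℕ) (hL : 1 ≤ L) (hp : 1 ≤ p)
    (φ : ℝ → ℝ) (h : ℝ) (hh0 : 0 < h) (hφ : SmoothApproxReLU φ h)
    (x : Fin p → ℝ) (hx : enorm' x = 1)
    (V W : Params L p) (ℓ : Fin (L + 1)) (hdiff : eqExcept V W ℓ)
    (hV : Real.sqrt ((L : ℝ) + 1 / 2) < ‖V‖) (hW : Real.sqrt ((L : ℝ) + 1 / 2) < ‖W‖) :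
    ((∀ j : Fin L, enorm' (uFeat φ V x j) ≤ ‖V‖ ^ (L + 1)) ∧
        |netOut φ V x| ≤ ‖V‖ ^ (L + 1)) ∧
    (∀ j : ℕ, j ≤ L → enorm' (feat φ V x j) ≤ ‖V‖ ^ (L + 1)) ∧
    ((∀ j : Fin L, enorm' (uFeat φ V x j - uFeat φ W x j) ≤
          layerOpDiff V W ℓ * ‖V‖ ^ (L + 1)) ∧
        |netOut φ V x - netOut φ W x| ≤ layerOpDiff V W ℓ * ‖V‖ ^ (L + 1)) ∧
    (∀ j : ℕ, j ≤ L → enorm' (feat φ V x j - feat φ W x j) ≤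
        layerOpDiff V W ℓ * ‖V‖ ^ (L + 1)) := by
  obtain ⟨hφd, hφ0, -, hφ'le, -⟩ := hφ
  have hlip : ∀ a b : ℝ, |φ a - φ b| ≤ |a - b| := phi_lip' hφd hφ'le
  have habs : ∀ z : ℝ, |φ z| ≤ |z| := fun z => by simpa [hφ0] using hlip z 0
  have h1V : (1:ℝ) < ‖V‖ := by
    have hLr : (1:ℝ) ≤ (L:ℝ) := by exact_mod_cast hL
    have hs := Real.sq_sqrt (show (0:ℝ) ≤ (L:ℝ) + 1/2 by linarith)
    have hs0 := Real.sqrt_nonneg ((L:ℝ) + 1/2)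
    nlinarith [hV]
  have hpow : ∀ {a b : ℕ}, a ≤ b → ‖V‖ ^ a ≤ ‖V‖ ^ b :=
    fun hab => pow_le_pow_right₀ h1V.le hab
  have hV0 : (0:ℝ) ≤ ‖V‖ := norm_nonneg V
  have hfeat : ∀ j : ℕ, j ≤ L → enorm' (feat φ V x j) ≤ ‖V‖ ^ j := by
    intro j
    induction j with
    | zero => intro _; simp [feat, hx]
    | succ k ih =>
      intro hk
      have hkL : k < L := hk
      have ihk := ih (Nat.le_of_succ_le hk)
      have h1 : enorm' (feat φ V x (k+1))
          ≤ enorm' ((layerMat V ⟨k, hkL⟩).mulVec (feat φ V x k)) := by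
        simp only [feat, dif_pos hkL]
        exact enorm_mono' fun i => by simpa using habs _
      refine h1.trans ((enorm_mulVec_le' _ _).trans ?_)
      calc Real.sqrt (∑ i, ∑ j, (layerMat V ⟨k, hkL⟩ i j) ^ 2) * enorm' (feat φ V x k)
          ≤ ‖V‖ * ‖V‖ ^ k :=
            mul_le_mul (frob_layer_le' V _) ihk (enorm_nonneg' _) hV0
        _ = ‖V‖ ^ (k+1) := (pow_succ' _ _).symm
  have hfeatL1 : ∀ j : ℕ, j ≤ L → enorm' (feat φ V x j) ≤ ‖V‖ ^ (L+1) :=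
    fun j hj => (hfeat j hj).trans (hpow (by omega))
  have huV : ∀ j : Fin L, enorm' (uFeat φ V x j) ≤ ‖V‖ ^ (L+1) := by
    intro j
    have hjL := j.2
    refine (enorm_mulVec_le' _ _).trans ?_
    calc Real.sqrt (∑ i, ∑ j', (layerMat V j i j') ^ 2) * enorm' (feat φ V x j)
        ≤ ‖V‖ * ‖V‖ ^ (j:ℕ) :=
          mul_le_mul (frob_layer_le' V _) (hfeat j hjL.le) (enorm_nonneg' _) hV0
      _ = ‖V‖ ^ ((j:ℕ)+1) := (pow_succ' _ _).symm
      _ ≤ ‖V‖ ^ (L+1) := hpow (by omega)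
  have hnetV : |netOut φ V x| ≤ ‖V‖ ^ (L+1) := by
    rw [netOut]
    refine (abs_dot_le' _ _).trans ?_
    calc enorm' (outVec V) * enorm' (feat φ V x L) ≤ ‖V‖ * ‖V‖ ^ L :=
          mul_le_mul (enorm_out_le' V) (hfeat L le_rfl) (enorm_nonneg' _) hV0
      _ = ‖V‖ ^ (L+1) := (pow_succ' _ _).symm
  set Δ := layerOpDiff V W ℓ with hΔdef
  have hΔ0 : 0 ≤ Δ := by
    rw [hΔdef, layerOpDiff]
    split <;> exact opNorm_nonneg' _
  have key : ∀ j : ℕ, j ≤ L →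
      (j ≤ (ℓ:ℕ) → feat φ V x j = feat φ W x j) ∧
      enorm' (feat φ V x j - feat φ W x j) ≤ Δ * ‖V‖ ^ j := by
    intro j
    induction j with
    | zero =>
      intro _
      refine ⟨fun _ => rfl, ?_⟩
      have hz : enorm' (feat φ V x 0 - feat φ W x 0) = 0 := by simp [feat, enorm']
      rw [hz]
      exact mul_nonneg hΔ0 (by positivity)
    | succ k ih =>
      intro hk
      have hkL : k < L := hk
      obtain ⟨iheq, ihle⟩ := ih (Nat.le_of_succ_le hk)
      have heqcase : k + 1 ≤ (ℓ:ℕ) → feat φ V x (k+1) = feat φ W x (k+1) := by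
        intro hkl
        have hM : layerMat V ⟨k, hkL⟩ = layerMat W ⟨k, hkL⟩ :=
          hdiff.1 ⟨k, hkL⟩ (show k ≠ (ℓ:ℕ) by omega)
        simp only [feat, dif_pos hkL, hM, iheq (by omega)]
      refine ⟨heqcase, ?_⟩
      have h1 : enorm' (feat φ V x (k+1) - feat φ W x (k+1))
          ≤ enorm' ((layerMat V ⟨k, hkL⟩).mulVec (feat φ V x k)
              - (layerMat W ⟨k, hkL⟩).mulVec (feat φ W x k)) := by
        simp only [feat, dif_pos hkL]
        refine enorm_mono' fun i => ?_
        simpa [Pi.sub_apply] using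
          hlip ((layerMat V ⟨k, hkL⟩).mulVec (feat φ V x k) i)
            ((layerMat W ⟨k, hkL⟩).mulVec (feat φ W x k) i)
      refine h1.trans ?_
      by_cases hkℓ : k = (ℓ:ℕ)
      · have hfe : feat φ V x k = feat φ W x k := iheq (by omega)
        have hℓL : (ℓ:ℕ) < L := by omega
        have hfin : (⟨(ℓ:ℕ), hℓL⟩ : Fin L) = ⟨k, hkL⟩ := Fin.ext (by simp [hkℓ])
        have hΔeq : Δ = opNorm (layerMat V ⟨k, hkL⟩ - layerMat W ⟨k, hkL⟩) := by
          rw [hΔdef, layerOpDiff, dif_pos hℓL, hfin]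
        rw [← hfe, ← Matrix.sub_mulVec]
        refine (enorm_mulVec_le_op' _ _).trans ?_
        rw [hΔeq]
        exact mul_le_mul_of_nonneg_left
          ((hfeat k (Nat.le_of_succ_le hk)).trans (hpow (by omega))) (opNorm_nonneg' _)
      · have hM : layerMat V ⟨k, hkL⟩ = layerMat W ⟨k, hkL⟩ :=
          hdiff.1 ⟨k, hkL⟩ (show k ≠ (ℓ:ℕ) from hkℓ)
        rw [← hM, ← Matrix.mulVec_sub]
        refine (enorm_mulVec_le' _ _).trans ?_
        calc Real.sqrt (∑ i, ∑ j, (layerMat V ⟨k, hkL⟩ i j) ^ 2)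
              * enorm' (feat φ V x k - feat φ W x k)
            ≤ ‖V‖ * (Δ * ‖V‖ ^ k) :=
              mul_le_mul (frob_layer_le' V _) ihle (enorm_nonneg' _) hV0
          _ = Δ * ‖V‖ ^ (k+1) := by ring
  have hufdiff : ∀ j : Fin L,
      enorm' (uFeat φ V x j - uFeat φ W x j) ≤ Δ * ‖V‖ ^ (L+1) := by
    intro j
    have hjL := j.2
    by_cases hjℓ : (j:ℕ) = (ℓ:ℕ)
    · have hfe : feat φ V x (j:ℕ) = feat φ W x (j:ℕ) := (key j hjL.le).1 (by omega)
      have hℓL : (ℓ:ℕ) < L := by omega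
      have hfin : (⟨(ℓ:ℕ), hℓL⟩ : Fin L) = j := Fin.ext (by simp [hjℓ])
      have hΔeq : Δ = opNorm (layerMat V j - layerMat W j) := by
        rw [hΔdef, layerOpDiff, dif_pos hℓL, hfin]
      rw [uFeat, uFeat, ← hfe, ← Matrix.sub_mulVec]
      refine (enorm_mulVec_le_op' _ _).trans ?_
      rw [hΔeq]
      exact mul_le_mul_of_nonneg_left (hfeatL1 j hjL.le) (opNorm_nonneg' _)
    · have hM : layerMat V j = layerMat W j := hdiff.1 j hjℓ
      rw [uFeat, uFeat, ← hM, ← Matrix.mulVec_sub]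
      refine (enorm_mulVec_le' _ _).trans ?_
      calc Real.sqrt (∑ i, ∑ j', (layerMat V j i j') ^ 2)
            * enorm' (feat φ V x (j:ℕ) - feat φ W x (j:ℕ))
          ≤ ‖V‖ * (Δ * ‖V‖ ^ (j:ℕ)) :=
            mul_le_mul (frob_layer_le' V _) ((key j hjL.le).2) (enorm_nonneg' _) hV0
        _ = Δ * ‖V‖ ^ ((j:ℕ)+1) := by ring
        _ ≤ Δ * ‖V‖ ^ (L+1) := mul_le_mul_of_nonneg_left (hpow (by omega)) hΔ0
  have hnetdiff : |netOut φ V x - netOut φ W x| ≤ Δ * ‖V‖ ^ (L+1) := by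
    by_cases hℓL : (ℓ:ℕ) < L
    · have hout : outVec V = outVec W := by
        funext j
        exact congrFun (congrFun (hdiff.2 hℓL) 0) j
      have hd : netOut φ V x - netOut φ W x
          = ∑ j, outVec V j * ((feat φ V x L - feat φ W x L) j) := by
        rw [netOut, netOut, ← hout, ← Finset.sum_sub_distrib]
        exact Finset.sum_congr rfl fun j _ => by simp [mul_sub]
      rw [hd]
      refine (abs_dot_le' _ _).trans ?_
      calc enorm' (outVec V) * enorm' (feat φ V x L - feat φ W x L)
          ≤ ‖V‖ * (Δ * ‖V‖ ^ L) :=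
            mul_le_mul (enorm_out_le' V) ((key L le_rfl).2) (enorm_nonneg' _) hV0
        _ = Δ * ‖V‖ ^ (L+1) := by ring
    · have hfe : feat φ V x L = feat φ W x L := by
        have hℓ2 := ℓ.2
        exact (key L le_rfl).1 (by omega)
      have hΔeq : Δ = opNorm (outMat V - outMat W) := by
        rw [hΔdef, layerOpDiff, dif_neg hℓL]
      have hd : netOut φ V x - netOut φ W x
          = ∑ j, (outVec V j - outVec W j) * feat φ V x L j := by
        rw [netOut, netOut, ← hfe, ← Finset.sum_sub_distrib]
        exact Finset.sum_congr rfl fun j _ => (sub_mul _ _ _).symm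
      have hmv : (outMat V - outMat W).mulVec (feat φ V x L)
          = fun _ : Fin 1 => ∑ j, (outVec V j - outVec W j) * feat φ V x L j := by
        funext i
        simp [Matrix.mulVec, dotProduct, outMat, outVec, Matrix.sub_apply]
      have hb := enorm_mulVec_le_op' (outMat V - outMat W) (feat φ V x L)
      rw [hmv, enorm_fin1'] at hb
      rw [hd, hΔeq]
      refine hb.trans ?_
      exact mul_le_mul_of_nonneg_left (hfeatL1 L le_rfl) (opNorm_nonneg' _)
  refine ⟨⟨huV, hnetV⟩, hfeatL1, ⟨hufdiff, hnetdiff⟩, fun j hj => ?_⟩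
  exact ((key j hj).2).trans (mul_le_mul_of_nonneg_left (hpow (by omega)) hΔ0)
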